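/- arXiv:2003.04558 — 5 statements merged into one kernel-verified Lean document; each statement's English description precedes it below -/
import Mathlib

section
/- Let d ≥ 1 and let K := {(a,b) ∈ ℝ × ℝ^d : a + |b|²/2 ≤ 0}, where |·| is the Euclidean norm. Then for every (a,b) ∈ ℝ × ℝ^d, the support function of K at (a,b) equals B(a,b); that is, sup{a·α + ⟨b,β⟩ : (α,β) ∈ K} = B(a,b), where the supremum is taken in [0,+∞] and B(a,b) = |b|²/(2a) if a > 0, B(0,0) = 0, and B(a,b) = +∞ if a < 0 or (a = 0 and b ≠ 0). -/
open MeasureTheory ENNReal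

noncomputable section
attribute [local instance] Classical.propDecidable

/-- The convex set `K = {(a,b) : a + |b|²/2 ≤ 0} ⊆ ℝ × ℝ^d`. -/
def Kset (d : ℕ) : Set (ℝ × EuclideanSpace ℝ (Fin d)) :=
  {p | p.1 + ‖p.2‖ ^ 2 / 2 ≤ 0}

/-- The function `B : ℝ × ℝ^d → [0,∞]`, `B(a,b) = |b|²/(2a)` if `a > 0`,
`B(0,0) = 0`, and `B(a,b) = +∞` if `a < 0` or (`a = 0` and `b ≠ 0`). -/
def Bfun (d : ℕ) : ℝ × EuclideanSpace ℝ (Fin d) → ℝ≥0∞ := fun p =>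
  if 0 < p.1 then ENNReal.ofReal (‖p.2‖ ^ 2 / (2 * p.1))
  else if p.1 = 0 ∧ p.2 = 0 then 0
  else ⊤

/-- The support function of `K` (with the supremum taken in `[0,+∞]`) equals `B`. -/
theorem support_function_of_K_eq_B (d : ℕ) (hd : 1 ≤ d)
    (a : ℝ) (b : EuclideanSpace ℝ (Fin d)) :
    ⨆ p ∈ Kset d, ENNReal.ofReal (a * p.1 + (inner ℝ b p.2 : ℝ)) = Bfun d (a, b) := by
  rcases lt_trichotomy a 0 with ha | ha | ha
  · -- a < 0 : sup is ⊤
    have hB : Bfun d (a, b) = ⊤ := by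
      simp [Bfun, not_lt.mpr ha.le, ha.ne]
    rw [hB, eq_top_iff, ← ENNReal.iSup_natCast]
    refine iSup_le fun n => ?_
    have hmem : ((n : ℝ) / a, (0 : EuclideanSpace ℝ (Fin d))) ∈ Kset d := by
      simp only [Kset, Set.mem_setOf_eq, norm_zero]
      have : (n : ℝ) / a ≤ 0 := div_nonpos_of_nonneg_of_nonpos n.cast_nonneg ha.le
      nlinarith
    calc (n : ℝ≥0∞) = ENNReal.ofReal (a * ((n : ℝ) / a) + (inner ℝ b (0 : EuclideanSpace ℝ (Fin d)) : ℝ)) := by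
          rw [inner_zero_right]
          rw [mul_div_cancel₀ _ ha.ne]
          simp
      _ ≤ _ := le_iSup₂ (f := fun p (_ : p ∈ Kset d) => ENNReal.ofReal (a * p.1 + (inner ℝ b p.2 : ℝ))) _ hmem
  · -- a = 0
    subst ha
    by_cases hb : b = 0
    · subst hb
      have hB : Bfun d (0, (0 : EuclideanSpace ℝ (Fin d))) = 0 := by simp [Bfun]
      rw [hB]
      refine le_antisymm (iSup₂_le fun p _ => ?_) (zero_le)
      simp
    · have hB : Bfun d (0, b) = ⊤ := by simp [Bfun, hb]
      rw [hB, eq_top_iff, ← ENNReal.iSup_natCast]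
      refine iSup_le fun n => ?_
      have hb' : ‖b‖ ≠ 0 := norm_ne_zero_iff.mpr hb
      have hbn : (0 : ℝ) < ‖b‖ ^ 2 := by positivity
      set t : ℝ := (n : ℝ) / ‖b‖ ^ 2 with ht
      have htn : 0 ≤ t := by positivity
      have hmem : (-(t ^ 2 * ‖b‖ ^ 2 / 2), t • b) ∈ Kset d := by
        simp only [Kset, Set.mem_setOf_eq, norm_smul, Real.norm_eq_abs, mul_pow, sq_abs]
        ring_nf
        nlinarith [sq_abs t]
      calc (n : ℝ≥0∞) = ENNReal.ofReal ((0:ℝ) * (-(t ^ 2 * ‖b‖ ^ 2 / 2)) + (inner ℝ b (t • b) : ℝ)) := by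
            rw [real_inner_smul_right, real_inner_self_eq_norm_sq]
            rw [zero_mul, zero_add, ht, div_mul_cancel₀ _ hbn.ne']
            simp
        _ ≤ _ := le_iSup₂ (f := fun p (_ : p ∈ Kset d) => ENNReal.ofReal ((0:ℝ) * p.1 + (inner ℝ b p.2 : ℝ))) _ hmem
  · -- a > 0
    have hB : Bfun d (a, b) = ENNReal.ofReal (‖b‖ ^ 2 / (2 * a)) := by simp [Bfun, ha]
    rw [hB]
    refine le_antisymm (iSup₂_le fun p hp => ?_) ?_
    · refine ENNReal.ofReal_le_ofReal ?_
      have hp' : p.1 + ‖p.2‖ ^ 2 / 2 ≤ 0 := hp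
      have hcs : (inner ℝ b p.2 : ℝ) ≤ ‖b‖ * ‖p.2‖ := real_inner_le_norm b p.2
      rw [le_div_iff₀ (by linarith : (0:ℝ) < 2 * a)]
      nlinarith [sq_nonneg (a * ‖p.2‖ - ‖b‖), mul_le_mul_of_nonneg_left hp' ha.le,
        mul_le_mul_of_nonneg_right hcs (by linarith : (0:ℝ) ≤ 2 * a), norm_nonneg p.2]
    · have hmem : (-(‖b‖ ^ 2 / (2 * a ^ 2)), (1 / a) • b) ∈ Kset d := by
        simp only [Kset, Set.mem_setOf_eq, norm_smul, Real.norm_eq_abs, mul_pow, sq_abs]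
        rw [div_pow]
        rw [show (1:ℝ)^2 = 1 by norm_num]
        rw [div_mul_eq_mul_div, one_mul, div_div]
        ring_nf
        exact le_refl _
      calc ENNReal.ofReal (‖b‖ ^ 2 / (2 * a))
          = ENNReal.ofReal (a * (-(‖b‖ ^ 2 / (2 * a ^ 2))) + (inner ℝ b ((1 / a) • b) : ℝ)) := by
            rw [real_inner_smul_right, real_inner_self_eq_norm_sq]
            congr 1
            field_simp
            ring
        _ ≤ _ := le_iSup₂ (f := fun p (_ : p ∈ Kset d) => ENNReal.ofReal (a * p.1 + (inner ℝ b p.2 : ℝ))) _ hmem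

end
end

section
/- Let D ⊂ ℝ^d be compact, let ρ be a finite signed Borel measure on D and let m be a finite ℝ^d-valued Borel vector measure on D. If the action A(ρ, m) is finite, then ρ is a nonnegative measure, i.e. ρ(E) ≥ 0 for every Borel set E ⊆ D. -/
open MeasureTheory ENNReal


noncomputable section

/-- Integral of a function against a finite signed measure, via the Jordan decomposition. -/
def signedIntegral {X : Type*} [MeasurableSpace X] (ρ : SignedMeasure X) (f : X → ℝ) : ℝ :=
  (∫ x, f x ∂ρ.toJordanDecomposition.posPart) - ∫ x, f x ∂ρ.toJordanDecomposition.negPart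

/-- The action `A(ρ,m)`: the supremum, taken in `[0,∞]`, of `∫ a dρ + ∫ b·dm` over
continuous `(a,b)` with values in `K`.  Here the `ℝ^d`-valued vector measure `m` is
encoded by its `d` signed-measure components. -/
def action {X : Type*} [MeasurableSpace X] [TopologicalSpace X] {d : ℕ}
    (ρ : SignedMeasure X) (m : Fin d → SignedMeasure X) : ℝ≥0∞ :=
  ⨆ (q : C(X, ℝ × EuclideanSpace ℝ (Fin d))) (_ : ∀ x, q x ∈ Kset d),
    ENNReal.ofReal (signedIntegral ρ (fun x => (q x).1) +
      ∑ i, signedIntegral (m i) (fun x => (q x).2 i))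


/-- If the action `A(ρ,m)` is finite, then `ρ` is a nonnegative measure,
i.e. `ρ(E) ≥ 0` for every Borel set `E`. -/
theorem nonneg_of_action_finite {d : ℕ} (D : Set (EuclideanSpace ℝ (Fin d)))
    (hD : IsCompact D) (ρ : SignedMeasure ↥D) (m : Fin d → SignedMeasure ↥D)
    (hfin : action ρ m ≠ ⊤) :
    ∀ E : Set ↥D, MeasurableSet E → 0 ≤ ρ E := by
  haveI : CompactSpace ↥D := isCompact_iff_compactSpace.mp hD
  set μ := ρ.toJordanDecomposition.posPart with hμ
  set ν := ρ.toJordanDecomposition.negPart with hν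
  -- Step A: every continuous nonpositive f has nonpositive signed integral.
  have stepA : ∀ f : C(↥D, ℝ), (∀ x, f x ≤ 0) → signedIntegral ρ f ≤ 0 := by
    intro f hf
    by_contra hpos
    push_neg at hpos
    set s := signedIntegral ρ f with hs
    -- for each n, the pair ((n:ℝ) • f, 0) is admissible
    have key : ∀ n : ℕ, (n : ℝ) * s ≤ (action ρ m).toReal := by
      intro n
      set q : C(↥D, ℝ × EuclideanSpace ℝ (Fin d)) :=
        ⟨fun x => ((n : ℝ) * f x, 0), by fun_prop⟩ with hq
      have hqK : ∀ x, q x ∈ Kset d := by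
        intro x
        have : (n : ℝ) * f x ≤ 0 :=
          mul_nonpos_of_nonneg_of_nonpos (Nat.cast_nonneg n) (hf x)
        simp [Kset, hq, this]
      have h1 : signedIntegral ρ (fun x => (q x).1) = (n : ℝ) * s := by
        simp only [hq, ContinuousMap.coe_mk, signedIntegral, hs, integral_const_mul]
        ring
      have h2 : ∀ i, signedIntegral (m i) (fun x => (q x).2 i) = 0 := by
        intro i
        have : (fun x : ↥D => (q x).2 i) = fun _ => (0 : ℝ) := by
          funext x; simp [hq]
        rw [this]
        simp [signedIntegral]
      have hle : ENNReal.ofReal ((n : ℝ) * s) ≤ action ρ m := by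
        have := le_iSup₂ (f := fun (q : C(↥D, ℝ × EuclideanSpace ℝ (Fin d)))
            (_ : ∀ x, q x ∈ Kset d) =>
            ENNReal.ofReal (signedIntegral ρ (fun x => (q x).1) +
              ∑ i, signedIntegral (m i) (fun x => (q x).2 i))) q hqK
        simpa [action, h1, h2] using this
      exact (ENNReal.ofReal_le_iff_le_toReal hfin).mp hle
      -- done
    obtain ⟨n, hn⟩ := exists_nat_gt ((action ρ m).toReal / s)
    have := key n
    rw [div_lt_iff₀ hpos] at hn
    linarith
  -- Step B: for every nonneg bounded continuous (ℝ≥0-valued) f, ∫⁻ f dν ≤ ∫⁻ f dμ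
  have stepB : ∀ f : BoundedContinuousFunction ↥D NNReal,
      ∫⁻ x, (f x : ℝ≥0∞) ∂ν ≤ ∫⁻ x, (f x : ℝ≥0∞) ∂μ := by
    intro f
    have hcont : Continuous fun x : ↥D => -((f x : ℝ)) :=
      (NNReal.continuous_coe.comp f.continuous).neg
    have hA := stepA ⟨fun x => -((f x : ℝ)), hcont⟩
      (fun x => neg_nonpos.mpr (f x).2)
    simp only [signedIntegral, ContinuousMap.coe_mk, integral_neg] at hA
    have hreal : ∫ x, (f x : ℝ) ∂ν ≤ ∫ x, (f x : ℝ) ∂μ := by linarith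
    rw [← BoundedContinuousFunction.toReal_lintegral_coe_eq_integral f ν,
      ← BoundedContinuousFunction.toReal_lintegral_coe_eq_integral f μ] at hreal
    exact (ENNReal.toReal_le_toReal
      (BoundedContinuousFunction.lintegral_lt_top_of_nnreal ν f).ne
      (BoundedContinuousFunction.lintegral_lt_top_of_nnreal μ f).ne).mp hreal
  -- Step C: ν F ≤ μ F for closed F
  have stepC : ∀ F : Set ↥D, IsClosed F → ν F ≤ μ F := by
    intro F hF
    exact le_of_tendsto_of_tendsto'
      (HasOuterApproxClosed.tendsto_lintegral_apprSeq hF ν)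
      (HasOuterApproxClosed.tendsto_lintegral_apprSeq hF μ)
      (fun n => stepB (hF.apprSeq n))
  -- Step D: ν = 0 on univ, using mutual singularity and inner regularity
  obtain ⟨S, hSm, hμS, hνS⟩ := ρ.toJordanDecomposition.mutuallySingular
  have hνS' : ν S = 0 := by
    by_contra h
    have hpos : 0 < ν S := pos_iff_ne_zero.mpr h
    obtain ⟨F, hFS, hFc, hF⟩ :=
      hSm.exists_lt_isClosed_of_ne_top (measure_ne_top ν S) hpos
    have : ν F ≤ 0 := (stepC F hFc).trans (le_of_le_of_eq (measure_mono hFS) hμS)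
    exact absurd (lt_of_lt_of_le hF this) (by simp)
  have hνuniv : ν Set.univ = 0 := by
    have := measure_add_measure_compl (μ := ν) hSm
    rw [hνS', hνS] at this
    simpa using this.symm
  have hνzero : ∀ E : Set ↥D, ν E = 0 := fun E =>
    le_antisymm ((measure_mono (Set.subset_univ E)).trans hνuniv.le) zero_le
  -- Step E: conclude
  intro E hE
  have : ρ E = (μ E).toReal - (ν E).toReal := by
    conv_lhs => rw [← ρ.toSignedMeasure_toJordanDecomposition]
    rw [JordanDecomposition.toSignedMeasure, VectorMeasure.sub_apply,
      Measure.toSignedMeasure_apply_measurable hE,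
      Measure.toSignedMeasure_apply_measurable hE]
    rfl
  rw [this, hνzero E]
  simp [ENNReal.toReal_nonneg]

end
end

section
/- (Theorem 3.2; Pock, Cremers, Bischof, Chambolle) Let H be a real Hilbert space and let C, 𝒦 ⊆ H be nonempty closed convex subsets. Assume there exists a saddle point of the pairing ⟨q, σ⟩ on C × 𝒦, i.e. a pair (σ̄, q̄) ∈ C × 𝒦 with ⟨q, σ̄⟩ ≤ ⟨q̄, σ̄⟩ ≤ ⟨q̄, σ⟩ for all q ∈ 𝒦 and σ ∈ C. Let τ₁, τ₂ > 0 with τ₁τ₂ < 1, let (σ⁰, q⁰) ∈ C × 𝒦, and define iterates by σ^{k+1} = P_C(σ^k − τ₁ q^k) and q^{k+1} = P_𝒦(q^k + τ₂(2σ^{k+1} − σ^k)), where P_C and P_𝒦 denote the metric (nearest-point) projections onto C and 𝒦. Then the sequence (σ^k, q^k) converges weakly in H × H to some (σ*, q*) ∈ C × 𝒦 that is a saddle point of the pairing on C × 𝒦. -/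
open Filter

section aux
variable {H : Type*} [NormedAddCommGroup H] [InnerProductSpace ℝ H]

local notation "⟪" x ", " y "⟫" => @inner ℝ _ _ x y

/-- Variational inequality for a nearest point of a convex set. -/
lemma pd_proj_vi {S : Set H} (hconv : Convex ℝ S) {x p : H} (hp : p ∈ S)
    (hmin : ∀ y ∈ S, dist x p ≤ dist x y) {z : H} (hz : z ∈ S) :
    ⟪x - p, z - p⟫ ≤ 0 := by
  have key : ∀ t : ℝ, 0 < t → t ≤ 1 → ⟪x - p, z - p⟫ ≤ t / 2 * ‖z - p‖ ^ 2 := by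
    intro t ht ht1
    have hmem : p + t • (z - p) ∈ S := by
      have h := hconv hp hz (by linarith : (0:ℝ) ≤ 1 - t) ht.le (by ring)
      have : (1 - t) • p + t • z = p + t • (z - p) := by module
      rwa [this] at h
    have hd := hmin _ hmem
    rw [dist_eq_norm, dist_eq_norm] at hd
    have hsq : ‖x - p‖ ^ 2 ≤ ‖x - (p + t • (z - p))‖ ^ 2 := by
      have := norm_nonneg (x - p)
      nlinarith [norm_nonneg (x - (p + t • (z - p)))]
    have hexp : ‖x - (p + t • (z - p))‖ ^ 2
        = ‖x - p‖ ^ 2 - 2 * (t * ⟪x - p, z - p⟫) + t ^ 2 * ‖z - p‖ ^ 2 := by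
      have h1 : x - (p + t • (z - p)) = (x - p) - t • (z - p) := by abel
      rw [h1, norm_sub_sq_real, real_inner_smul_right, norm_smul, Real.norm_eq_abs,
        abs_of_pos ht, mul_pow]
    rw [hexp] at hsq
    have h2 : 2 * (t * ⟪x - p, z - p⟫) ≤ t ^ 2 * ‖z - p‖ ^ 2 := by linarith
    calc ⟪x - p, z - p⟫ = (2 * (t * ⟪x - p, z - p⟫)) / (2 * t) := by
          field_simp
    _ ≤ (t ^ 2 * ‖z - p‖ ^ 2) / (2 * t) := by
          apply div_le_div_of_nonneg_right h2 (by linarith) |>.trans_eq rfl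
    _ = t / 2 * ‖z - p‖ ^ 2 := by field_simp
  have hlim : Tendsto (fun n : ℕ => ((1:ℝ)/(n+1)) / 2 * ‖z - p‖ ^ 2) atTop (nhds 0) := by
    have h0 : Tendsto (fun n : ℕ => ((1:ℝ)/(n+1))) atTop (nhds 0) :=
      tendsto_one_div_add_atTop_nhds_zero_nat
    have := (h0.div_const 2).mul_const (‖z - p‖ ^ 2)
    simpa using this
  refine ge_of_tendsto' hlim fun n => ?_
  exact key (1/(n+1)) (by positivity) (by
    rw [div_le_one (by positivity)]; linarith [Nat.cast_nonneg (α := ℝ) n])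

/-- The scaled quadratic form. -/
noncomputable def pdQ (τ₁ τ₂ : ℝ) (u v : H) : ℝ :=
  τ₂ * ‖u‖ ^ 2 + τ₁ * ‖v‖ ^ 2 - 2 * (τ₁ * τ₂) * ⟪u, v⟫

lemma pdQ_lower {τ₁ τ₂ : ℝ} (h1 : 0 < τ₁) (h2 : 0 < τ₂) (hττ : τ₁ * τ₂ < 1) (u v : H) :
    (1 - Real.sqrt (τ₁ * τ₂)) * (τ₂ * ‖u‖ ^ 2 + τ₁ * ‖v‖ ^ 2) ≤ pdQ τ₁ τ₂ u v := by
  have hs1 := Real.sq_sqrt h1.le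
  have hs2 := Real.sq_sqrt h2.le
  have hmul : Real.sqrt (τ₁ * τ₂) = Real.sqrt τ₁ * Real.sqrt τ₂ := Real.sqrt_mul h1.le τ₂
  have hin := real_inner_le_norm u v
  have hn1 := norm_nonneg u
  have hn2 := norm_nonneg v
  have hsq := sq_nonneg (Real.sqrt τ₂ * ‖u‖ - Real.sqrt τ₁ * ‖v‖)
  have hs1' := Real.sqrt_nonneg τ₁
  have hs2' := Real.sqrt_nonneg τ₂
  have hneg : -(‖u‖ * ‖v‖) ≤ ⟪u, v⟫ := by
    have := real_inner_le_norm u (-v)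
    simp only [inner_neg_right, norm_neg] at this
    linarith
  have e1 : 2 * (Real.sqrt τ₁ * Real.sqrt τ₂) * (‖u‖ * ‖v‖) ≤ τ₂ * ‖u‖ ^ 2 + τ₁ * ‖v‖ ^ 2 := by
    nlinarith [hsq, hs1, hs2]
  have e2 : 2 * (τ₁ * τ₂) * ⟪u, v⟫ ≤ (Real.sqrt τ₁ * Real.sqrt τ₂) * (τ₂ * ‖u‖ ^ 2 + τ₁ * ‖v‖ ^ 2) := by
    have hττ' : τ₁ * τ₂ = (Real.sqrt τ₁ * Real.sqrt τ₂) * (Real.sqrt τ₁ * Real.sqrt τ₂) := by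
      linear_combination (-τ₂) * hs1 + (-(Real.sqrt τ₁ ^ 2)) * hs2
    calc 2 * (τ₁ * τ₂) * ⟪u, v⟫ ≤ 2 * (τ₁ * τ₂) * (‖u‖ * ‖v‖) := by
          apply mul_le_mul_of_nonneg_left hin (by positivity)
    _ = (Real.sqrt τ₁ * Real.sqrt τ₂) * (2 * (Real.sqrt τ₁ * Real.sqrt τ₂) * (‖u‖ * ‖v‖)) := by
          rw [hττ']; ring
    _ ≤ (Real.sqrt τ₁ * Real.sqrt τ₂) * (τ₂ * ‖u‖ ^ 2 + τ₁ * ‖v‖ ^ 2) := by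
          apply mul_le_mul_of_nonneg_left e1 (by positivity)
  unfold pdQ
  rw [hmul]
  nlinarith [e2]

lemma pdQ_nonneg {τ₁ τ₂ : ℝ} (h1 : 0 < τ₁) (h2 : 0 < τ₂) (hττ : τ₁ * τ₂ < 1) (u v : H) :
    0 ≤ pdQ τ₁ τ₂ u v := by
  have h := pdQ_lower h1 h2 hττ u v
  have hκ : Real.sqrt (τ₁ * τ₂) < 1 := by
    nlinarith [Real.sq_sqrt (mul_pos h1 h2).le, Real.sqrt_nonneg (τ₁ * τ₂)]
  have hE : (0:ℝ) ≤ τ₂ * ‖u‖ ^ 2 + τ₁ * ‖v‖ ^ 2 := by positivity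
  nlinarith [mul_nonneg (by linarith : (0:ℝ) ≤ 1 - Real.sqrt (τ₁ * τ₂)) hE]

end aux

open RealInnerProductSpace

set_option maxHeartbeats 1600000 in
/-- (Theorem 3.2; Pock, Cremers, Bischof, Chambolle.)  Weak convergence of the primal-dual
proximal splitting iterates to a saddle point of the bilinear pairing `⟨q, σ⟩` over
`C × 𝒦`, for nonempty closed convex sets `C, 𝒦` in a real Hilbert space, provided a saddle
point exists and `τ₁ τ₂ < 1`.  The metric projections `P_C, P_𝒦` are characterized as
nearest-point maps. -/
theorem primal_dual_weak_convergence
    {H : Type*} [NormedAddCommGroup H] [InnerProductSpace ℝ H] [CompleteSpace H]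
    (C K : Set H)
    (hCne : C.Nonempty) (hCc : IsClosed C) (hCconv : Convex ℝ C)
    (hKne : K.Nonempty) (hKc : IsClosed K) (hKconv : Convex ℝ K)
    (PC PK : H → H)
    (hPC : ∀ x : H, PC x ∈ C ∧ ∀ y ∈ C, dist x (PC x) ≤ dist x y)
    (hPK : ∀ x : H, PK x ∈ K ∧ ∀ y ∈ K, dist x (PK x) ≤ dist x y)
    (σb qb : H) (hσb : σb ∈ C) (hqb : qb ∈ K)
    (hsaddle : ∀ q' ∈ K, ∀ σ' ∈ C,
      (inner ℝ q' σb : ℝ) ≤ (inner ℝ qb σb : ℝ) ∧ (inner ℝ qb σb : ℝ) ≤ (inner ℝ qb σ' : ℝ))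
    (τ₁ τ₂ : ℝ) (hτ₁ : 0 < τ₁) (hτ₂ : 0 < τ₂) (hττ : τ₁ * τ₂ < 1)
    (σ q : ℕ → H) (hσ0 : σ 0 ∈ C) (hq0 : q 0 ∈ K)
    (hstep1 : ∀ k, σ (k + 1) = PC (σ k - τ₁ • q k))
    (hstep2 : ∀ k, q (k + 1) = PK (q k + τ₂ • ((2 : ℝ) • σ (k + 1) - σ k))) :
    ∃ σs qs : H, σs ∈ C ∧ qs ∈ K ∧
      (∀ q' ∈ K, ∀ σ' ∈ C,
        (inner ℝ q' σs : ℝ) ≤ (inner ℝ qs σs : ℝ) ∧ (inner ℝ qs σs : ℝ) ≤ (inner ℝ qs σ' : ℝ)) ∧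
      (∀ y : H, Tendsto (fun k => (inner ℝ (σ k) y : ℝ)) atTop (nhds (inner ℝ σs y))) ∧
      (∀ y : H, Tendsto (fun k => (inner ℝ (q k) y : ℝ)) atTop (nhds (inner ℝ qs y))) := by
  -- iterates stay in the sets
  have hainC : ∀ k, σ k ∈ C := by
    intro k
    cases k with
    | zero => exact hσ0
    | succ n => rw [hstep1]; exact (hPC _).1
  have hbinK : ∀ k, q k ∈ K := by
    intro k
    cases k with
    | zero => exact hq0
    | succ n => rw [hstep2]; exact (hPK _).1
  -- variational inequalities for the two projection steps
  have hA : ∀ k, ∀ z ∈ C, ⟪σ k - τ₁ • q k - σ (k+1), z - σ (k+1)⟫ ≤ 0 := by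
    intro k z hz
    rw [hstep1 k]
    exact pd_proj_vi hCconv (hPC _).1 (hPC _).2 hz
  have hB : ∀ k, ∀ w ∈ K,
      ⟪q k + τ₂ • ((2:ℝ) • σ (k+1) - σ k) - q (k+1), w - q (k+1)⟫ ≤ 0 := by
    intro k w hw
    rw [hstep2 k]
    exact pd_proj_vi hKconv (hPK _).1 (hPK _).2 hw
  -- the key Fejér-type inequality
  have hkey : ∀ s ∈ C, ∀ t ∈ K,
      (∀ q' ∈ K, ⟪q', s⟫ ≤ ⟪t, s⟫) → (∀ σ' ∈ C, ⟪t, s⟫ ≤ ⟪t, σ'⟫) → ∀ k,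
      pdQ τ₁ τ₂ (σ (k+1) - s) (q (k+1) - t) + pdQ τ₁ τ₂ (σ k - σ (k+1)) (q k - q (k+1))
        ≤ pdQ τ₁ τ₂ (σ k - s) (q k - t) := by
    intro s hs t ht hsad1 hsad2 k
    have h1 := hA k s hs
    have h2 := hB k t ht
    have hsA : ⟪q (k+1), s⟫ ≤ ⟪t, s⟫ := hsad1 _ (hbinK (k+1))
    have hsB : ⟪t, s⟫ ≤ ⟪t, σ (k+1)⟫ := hsad2 _ (hainC (k+1))
    have hA' : τ₂ * ⟪σ k - τ₁ • q k - σ (k+1), s - σ (k+1)⟫ ≤ 0 :=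
      mul_nonpos_of_nonneg_of_nonpos hτ₂.le h1
    have hB' : τ₁ * ⟪q k + τ₂ • ((2:ℝ) • σ (k+1) - σ k) - q (k+1), t - q (k+1)⟫ ≤ 0 :=
      mul_nonpos_of_nonneg_of_nonpos hτ₁.le h2
    have hC' : 0 ≤ τ₁ * τ₂ * (⟪t, σ (k+1)⟫ - ⟪q (k+1), s⟫) :=
      mul_nonneg (mul_pos hτ₁ hτ₂).le (by linarith)
    have hid : pdQ τ₁ τ₂ (σ (k+1) - s) (q (k+1) - t)
          + pdQ τ₁ τ₂ (σ k - σ (k+1)) (q k - q (k+1)) - pdQ τ₁ τ₂ (σ k - s) (q k - t)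
        = 2 * (τ₂ * ⟪σ k - τ₁ • q k - σ (k+1), s - σ (k+1)⟫)
          + 2 * (τ₁ * ⟪q k + τ₂ • ((2:ℝ) • σ (k+1) - σ k) - q (k+1), t - q (k+1)⟫)
          - 2 * (τ₁ * τ₂ * (⟪t, σ (k+1)⟫ - ⟪q (k+1), s⟫)) := by
      have c1 : ⟪q k, σ k⟫ = ⟪σ k, q k⟫ := real_inner_comm _ _
      have c2 : ⟪σ (k+1), σ k⟫ = ⟪σ k, σ (k+1)⟫ := real_inner_comm _ _
      have c3 : ⟪q (k+1), σ k⟫ = ⟪σ k, q (k+1)⟫ := real_inner_comm _ _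
      have c4 : ⟪s, σ k⟫ = ⟪σ k, s⟫ := real_inner_comm _ _
      have c5 : ⟪t, σ k⟫ = ⟪σ k, t⟫ := real_inner_comm _ _
      have c6 : ⟪σ (k+1), q k⟫ = ⟪q k, σ (k+1)⟫ := real_inner_comm _ _
      have c7 : ⟪q (k+1), q k⟫ = ⟪q k, q (k+1)⟫ := real_inner_comm _ _
      have c8 : ⟪s, q k⟫ = ⟪q k, s⟫ := real_inner_comm _ _
      have c9 : ⟪t, q k⟫ = ⟪q k, t⟫ := real_inner_comm _ _
      have c10 : ⟪q (k+1), σ (k+1)⟫ = ⟪σ (k+1), q (k+1)⟫ := real_inner_comm _ _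
      have c11 : ⟪s, σ (k+1)⟫ = ⟪σ (k+1), s⟫ := real_inner_comm _ _
      have c12 : ⟪t, σ (k+1)⟫ = ⟪σ (k+1), t⟫ := real_inner_comm _ _
      have c13 : ⟪s, q (k+1)⟫ = ⟪q (k+1), s⟫ := real_inner_comm _ _
      have c14 : ⟪t, q (k+1)⟫ = ⟪q (k+1), t⟫ := real_inner_comm _ _
      have c15 : ⟪t, s⟫ = ⟪s, t⟫ := real_inner_comm _ _
      simp only [pdQ, ← real_inner_self_eq_norm_sq, inner_sub_left, inner_sub_right,
        inner_add_left, inner_add_right, real_inner_smul_left, real_inner_smul_right,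
        c1, c2, c3, c4, c5, c6, c7, c8, c9, c10, c11, c12, c13, c14, c15]
      ring
    linarith
  -- convergence of distances to saddle points
  have hDconv : ∀ s ∈ C, ∀ t ∈ K,
      (∀ q' ∈ K, ⟪q', s⟫ ≤ ⟪t, s⟫) → (∀ σ' ∈ C, ⟪t, s⟫ ≤ ⟪t, σ'⟫) →
      ∃ L : ℝ, Tendsto (fun k => pdQ τ₁ τ₂ (σ k - s) (q k - t)) atTop (nhds L) ∧
        ∀ k, pdQ τ₁ τ₂ (σ k - s) (q k - t) ≤ pdQ τ₁ τ₂ (σ 0 - s) (q 0 - t) := by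
    intro s hs t ht h1 h2
    have hanti : Antitone (fun k => pdQ τ₁ τ₂ (σ k - s) (q k - t)) := by
      apply antitone_nat_of_succ_le
      intro k
      have hk := hkey s hs t ht h1 h2 k
      have h0 := pdQ_nonneg hτ₁ hτ₂ hττ (σ k - σ (k+1)) (q k - q (k+1))
      linarith
    refine ⟨_, tendsto_atTop_ciInf hanti ⟨0, ?_⟩, fun k => hanti (Nat.zero_le k)⟩
    rintro x ⟨k, rfl⟩
    exact pdQ_nonneg hτ₁ hτ₂ hττ _ _
  have hsadb1 : ∀ q' ∈ K, ⟪q', σb⟫ ≤ ⟪qb, σb⟫ := fun q' hq' => (hsaddle q' hq' σb hσb).1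
  have hsadb2 : ∀ σ' ∈ C, ⟪qb, σb⟫ ≤ ⟪qb, σ'⟫ := fun σ' hσ' => (hsaddle qb hqb σ' hσ').2
  obtain ⟨L0, hL0, hL0b⟩ := hDconv σb hσb qb hqb hsadb1 hsadb2
  -- successive differences go to zero in the quadratic form
  have hE : Tendsto (fun k => pdQ τ₁ τ₂ (σ k - σ (k+1)) (q k - q (k+1))) atTop (nhds 0) := by
    have hL0' : Tendsto (fun k => pdQ τ₁ τ₂ (σ (k+1) - σb) (q (k+1) - qb)) atTop (nhds L0) := by
      have := hL0.comp (tendsto_add_atTop_nat 1)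
      exact this
    have hub : ∀ k, pdQ τ₁ τ₂ (σ k - σ (k+1)) (q k - q (k+1)) ≤
        pdQ τ₁ τ₂ (σ k - σb) (q k - qb) - pdQ τ₁ τ₂ (σ (k+1) - σb) (q (k+1) - qb) := by
      intro k
      have := hkey σb hσb qb hqb hsadb1 hsadb2 k
      linarith
    apply squeeze_zero (fun k => pdQ_nonneg hτ₁ hτ₂ hττ _ _) hub
    have := hL0.sub hL0'
    simpa using this
  set κ : ℝ := Real.sqrt (τ₁ * τ₂) with hκdef
  have hκ0 : 0 ≤ κ := Real.sqrt_nonneg _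
  have hκ1 : κ < 1 := by
    nlinarith [Real.sq_sqrt (mul_pos hτ₁ hτ₂).le, Real.sqrt_nonneg (τ₁ * τ₂)]
  have hc1 : 0 < (1 - κ) * τ₁ := mul_pos (by linarith) hτ₁
  have hc2 : 0 < (1 - κ) * τ₂ := mul_pos (by linarith) hτ₂
  -- successive differences go to zero in norm
  have hnormsq : ∀ (u v : H), ((1 - κ) * τ₂) * ‖u‖ ^ 2 ≤ pdQ τ₁ τ₂ u v
      ∧ ((1 - κ) * τ₁) * ‖v‖ ^ 2 ≤ pdQ τ₁ τ₂ u v := by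
    intro u v
    have hl := pdQ_lower hτ₁ hτ₂ hττ u v
    constructor
    · nlinarith [mul_nonneg (mul_nonneg (by linarith : (0:ℝ) ≤ 1 - κ) hτ₁.le) (sq_nonneg ‖v‖)]
    · nlinarith [mul_nonneg (mul_nonneg (by linarith : (0:ℝ) ≤ 1 - κ) hτ₂.le) (sq_nonneg ‖u‖)]
  have hsq_to_norm : ∀ f : ℕ → H, Tendsto (fun k => ‖f k‖ ^ 2) atTop (nhds 0) →
      Tendsto (fun k => ‖f k‖) atTop (nhds 0) := by
    intro f hf
    have h2 := (Real.continuous_sqrt.tendsto 0).comp hf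
    rw [Real.sqrt_zero] at h2
    exact h2.congr fun k => by simp [Function.comp, Real.sqrt_sq (norm_nonneg _)]
  have hd0 : Tendsto (fun k => ‖σ k - σ (k+1)‖) atTop (nhds 0) := by
    apply hsq_to_norm
    apply squeeze_zero (fun k => sq_nonneg _)
      (g := fun k => pdQ τ₁ τ₂ (σ k - σ (k+1)) (q k - q (k+1)) / ((1 - κ) * τ₂))
      (fun k => (le_div_iff₀ hc2).mpr (by
        have := (hnormsq (σ k - σ (k+1)) (q k - q (k+1))).1; linarith))
    simpa using hE.div_const ((1 - κ) * τ₂)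
  have he0 : Tendsto (fun k => ‖q k - q (k+1)‖) atTop (nhds 0) := by
    apply hsq_to_norm
    apply squeeze_zero (fun k => sq_nonneg _)
      (g := fun k => pdQ τ₁ τ₂ (σ k - σ (k+1)) (q k - q (k+1)) / ((1 - κ) * τ₁))
      (fun k => (le_div_iff₀ hc1).mpr (by
        have := (hnormsq (σ k - σ (k+1)) (q k - q (k+1))).2; linarith))
    simpa using hE.div_const ((1 - κ) * τ₁)
  -- boundedness of the iterates
  have hRσex : ∃ R : ℝ, ∀ k, ‖σ k‖ ≤ R := by
    refine ⟨Real.sqrt (pdQ τ₁ τ₂ (σ 0 - σb) (q 0 - qb) / ((1 - κ) * τ₂)) + ‖σb‖, fun k => ?_⟩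
    have h1 : ((1 - κ) * τ₂) * ‖σ k - σb‖ ^ 2 ≤ pdQ τ₁ τ₂ (σ 0 - σb) (q 0 - qb) :=
      le_trans (hnormsq _ _).1 (hL0b k)
    have h2 : ‖σ k - σb‖ ^ 2 ≤ pdQ τ₁ τ₂ (σ 0 - σb) (q 0 - qb) / ((1 - κ) * τ₂) :=
      (le_div_iff₀ hc2).mpr (by linarith)
    have h3 : ‖σ k - σb‖ ≤ Real.sqrt (pdQ τ₁ τ₂ (σ 0 - σb) (q 0 - qb) / ((1 - κ) * τ₂)) := by
      have := Real.sqrt_le_sqrt h2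
      rwa [Real.sqrt_sq (norm_nonneg _)] at this
    have h4 : ‖σ k‖ ≤ ‖σ k - σb‖ + ‖σb‖ := by
      have := norm_add_le (σ k - σb) σb
      simpa using this
    linarith
  have hRqex : ∃ R : ℝ, ∀ k, ‖q k‖ ≤ R := by
    refine ⟨Real.sqrt (pdQ τ₁ τ₂ (σ 0 - σb) (q 0 - qb) / ((1 - κ) * τ₁)) + ‖qb‖, fun k => ?_⟩
    have h1 : ((1 - κ) * τ₁) * ‖q k - qb‖ ^ 2 ≤ pdQ τ₁ τ₂ (σ 0 - σb) (q 0 - qb) :=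
      le_trans (hnormsq _ _).2 (hL0b k)
    have h2 : ‖q k - qb‖ ^ 2 ≤ pdQ τ₁ τ₂ (σ 0 - σb) (q 0 - qb) / ((1 - κ) * τ₁) :=
      (le_div_iff₀ hc1).mpr (by linarith)
    have h3 : ‖q k - qb‖ ≤ Real.sqrt (pdQ τ₁ τ₂ (σ 0 - σb) (q 0 - qb) / ((1 - κ) * τ₁)) := by
      have := Real.sqrt_le_sqrt h2
      rwa [Real.sqrt_sq (norm_nonneg _)] at this
    have h4 : ‖q k‖ ≤ ‖q k - qb‖ + ‖qb‖ := by
      have := norm_add_le (q k - qb) qb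
      simpa using this
    linarith
  obtain ⟨Rσ, hRσ⟩ := hRσex
  obtain ⟨Rq, hRq⟩ := hRqex
  have hRσ0 : 0 ≤ Rσ := le_trans (norm_nonneg _) (hRσ 0)
  have hRq0 : 0 ≤ Rq := le_trans (norm_nonneg _) (hRq 0)
  -- limits along ultrafilters finer than atTop
  have hmain : ∀ U : Ultrafilter ℕ, ↑U ≤ (atTop : Filter ℕ) →
      ∃ σs qs : H, σs ∈ C ∧ qs ∈ K ∧
        (∀ q' ∈ K, ⟪q', σs⟫ ≤ ⟪qs, σs⟫) ∧ (∀ σ' ∈ C, ⟪qs, σs⟫ ≤ ⟪qs, σ'⟫) ∧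
        (∀ y : H, Tendsto (fun k => ⟪σ k, y⟫) U (nhds ⟪σs, y⟫)) ∧
        (∀ y : H, Tendsto (fun k => ⟪q k, y⟫) U (nhds ⟪qs, y⟫)) := by
    intro U hU
    -- construct the weak limit of a bounded sequence along U via Riesz representation
    have getlim : ∀ (g : ℕ → H) (R : ℝ), (∀ k, ‖g k‖ ≤ R) →
        ∃ x : H, ∀ y : H, Tendsto (fun k => ⟪g k, y⟫) U (nhds ⟪x, y⟫) := by
      intro g R hR
      have hR0 : 0 ≤ R := le_trans (norm_nonneg _) (hR 0)
      have hex : ∀ y : H, ∃ L : ℝ, Tendsto (fun k => ⟪g k, y⟫) U (nhds L) ∧ |L| ≤ R * ‖y‖ := by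
        intro y
        have hmem : ∀ k, ⟪g k, y⟫ ∈ Set.Icc (-(R * ‖y‖)) (R * ‖y‖) := by
          intro k
          have h1 := abs_real_inner_le_norm (g k) y
          have h2 : ‖g k‖ * ‖y‖ ≤ R * ‖y‖ :=
            mul_le_mul_of_nonneg_right (hR k) (norm_nonneg y)
          have h3 := abs_le.mp (le_trans h1 h2)
          exact ⟨h3.1, h3.2⟩
        obtain ⟨L, hL1, hL2⟩ := (isCompact_Icc (a := -(R * ‖y‖)) (b := R * ‖y‖)).ultrafilter_le_nhds
          (U.map (fun k => ⟪g k, y⟫)) (by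
            rw [le_principal_iff]
            exact Filter.mem_map.mpr (Filter.univ_mem' hmem))
        exact ⟨L, hL2, abs_le.mpr ⟨hL1.1, hL1.2⟩⟩
      choose Lf hLf hLb using hex
      have hadd : ∀ y z, Lf (y + z) = Lf y + Lf z := by
        intro y z
        refine tendsto_nhds_unique (hLf (y + z)) ?_
        have := (hLf y).add (hLf z)
        simpa [inner_add_right] using this
      have hsmul : ∀ (c : ℝ) (y : H), Lf (c • y) = c * Lf y := by
        intro c y
        refine tendsto_nhds_unique (hLf (c • y)) ?_
        have := (hLf y).const_mul c
        simpa [real_inner_smul_right] using this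
      let F : H →L[ℝ] ℝ := LinearMap.mkContinuous
        { toFun := Lf, map_add' := hadd, map_smul' := hsmul } R
        (fun y => by simpa [Real.norm_eq_abs] using hLb y)
      refine ⟨(InnerProductSpace.toDual ℝ H).symm F, fun y => ?_⟩
      have hFy : ⟪(InnerProductSpace.toDual ℝ H).symm F, y⟫ = F y := by
        rw [← InnerProductSpace.toDual_apply_apply]
        simp
      rw [hFy]
      exact hLf y
    obtain ⟨σs, hσs⟩ := getlim σ Rσ hRσ
    obtain ⟨qs, hqs⟩ := getlim q Rq hRq
    -- the weak limit lies in C (resp. K)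
    have hmemC : σs ∈ C := by
      have hpC : PC σs ∈ C := (hPC σs).1
      have hVI : ∀ k, ⟪σ k, σs - PC σs⟫ ≤ ⟪PC σs, σs - PC σs⟫ := by
        intro k
        have h1 := pd_proj_vi hCconv hpC (hPC σs).2 (hainC k)
        have h2 : ⟪σs - PC σs, σ k - PC σs⟫
            = ⟪σ k, σs - PC σs⟫ - ⟪PC σs, σs - PC σs⟫ := by
          rw [real_inner_comm]
          simp [inner_sub_left]
        linarith
      have hlim : ⟪σs, σs - PC σs⟫ ≤ ⟪PC σs, σs - PC σs⟫ :=
        le_of_tendsto (hσs (σs - PC σs)) (Filter.Eventually.of_forall hVI)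
      have hnorm : ‖σs - PC σs‖ ^ 2 ≤ 0 := by
        rw [← real_inner_self_eq_norm_sq]
        simp only [inner_sub_left]
        linarith
      have h0 : σs - PC σs = 0 := by
        have := norm_nonneg (σs - PC σs)
        have hn : ‖σs - PC σs‖ = 0 := by nlinarith
        exact norm_eq_zero.mp hn
      have : σs = PC σs := by
        have := sub_eq_zero.mp h0
        exact this
      rw [this]
      exact hpC
    have hmemK : qs ∈ K := by
      have hpK : PK qs ∈ K := (hPK qs).1
      have hVI : ∀ k, ⟪q k, qs - PK qs⟫ ≤ ⟪PK qs, qs - PK qs⟫ := by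
        intro k
        have h1 := pd_proj_vi hKconv hpK (hPK qs).2 (hbinK k)
        have h2 : ⟪qs - PK qs, q k - PK qs⟫
            = ⟪q k, qs - PK qs⟫ - ⟪PK qs, qs - PK qs⟫ := by
          rw [real_inner_comm]
          simp [inner_sub_left]
        linarith
      have hlim : ⟪qs, qs - PK qs⟫ ≤ ⟪PK qs, qs - PK qs⟫ :=
        le_of_tendsto (hqs (qs - PK qs)) (Filter.Eventually.of_forall hVI)
      have hnorm : ‖qs - PK qs‖ ^ 2 ≤ 0 := by
        rw [← real_inner_self_eq_norm_sq]
        simp only [inner_sub_left]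
        linarith
      have h0 : qs - PK qs = 0 := by
        have := norm_nonneg (qs - PK qs)
        have hn : ‖qs - PK qs‖ = 0 := by nlinarith
        exact norm_eq_zero.mp hn
      have : qs = PK qs := sub_eq_zero.mp h0
      rw [this]
      exact hpK
    -- the weak limit is a saddle point
    have hsadlim : ∀ z ∈ C, ∀ w ∈ K, ⟪σs, w⟫ ≤ ⟪qs, z⟫ := by
      intro z hz w hw
      -- per-iteration estimate
      have hper : ∀ k, ⟪σ (k+1), w⟫ - ⟪q k, z⟫ ≤
          ⟪σ (k+1), q (k+1) - q k⟫ + ⟪σ k - σ (k+1), w - q (k+1)⟫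
            - ⟪q k - q (k+1), w - q (k+1)⟫ / τ₂
            - ⟪σ k - σ (k+1), z - σ (k+1)⟫ / τ₁ := by
        intro k
        have h1 := hA k z hz
        have h2 := hB k w hw
        have hd1 : ⟪σ k - τ₁ • q k - σ (k+1), z - σ (k+1)⟫ / τ₁ ≤ 0 :=
          div_nonpos_iff.mpr (Or.inr ⟨h1, hτ₁.le⟩)
        have hd2 : ⟪q k + τ₂ • ((2:ℝ) • σ (k+1) - σ k) - q (k+1), w - q (k+1)⟫ / τ₂ ≤ 0 :=
          div_nonpos_iff.mpr (Or.inr ⟨h2, hτ₂.le⟩)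
        have hid2 : (⟪σ (k+1), w⟫ - ⟪q k, z⟫)
            - (⟪σ (k+1), q (k+1) - q k⟫ + ⟪σ k - σ (k+1), w - q (k+1)⟫
              - ⟪q k - q (k+1), w - q (k+1)⟫ / τ₂
              - ⟪σ k - σ (k+1), z - σ (k+1)⟫ / τ₁)
            = ⟪σ k - τ₁ • q k - σ (k+1), z - σ (k+1)⟫ / τ₁
              + ⟪q k + τ₂ • ((2:ℝ) • σ (k+1) - σ k) - q (k+1), w - q (k+1)⟫ / τ₂ := by
          have c1 : ⟪q k, σ (k+1)⟫ = ⟪σ (k+1), q k⟫ := real_inner_comm _ _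
          have c2 : ⟪q (k+1), σ (k+1)⟫ = ⟪σ (k+1), q (k+1)⟫ := real_inner_comm _ _
          field_simp
          simp only [inner_sub_left, inner_sub_right, inner_add_left, inner_add_right,
            real_inner_smul_left, real_inner_smul_right, c1, c2]
          ring
        linarith
      -- the error terms tend to zero
      have herr : Tendsto (fun k => ⟪σ (k+1), q (k+1) - q k⟫ + ⟪σ k - σ (k+1), w - q (k+1)⟫
          - ⟪q k - q (k+1), w - q (k+1)⟫ / τ₂
          - ⟪σ k - σ (k+1), z - σ (k+1)⟫ / τ₁) atTop (nhds 0) := by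
        have hb1 : ∀ k, |⟪σ (k+1), q (k+1) - q k⟫| ≤ Rσ * ‖q k - q (k+1)‖ := by
          intro k
          have h1 := abs_real_inner_le_norm (σ (k+1)) (q (k+1) - q k)
          have h2 : ‖q (k+1) - q k‖ = ‖q k - q (k+1)‖ := norm_sub_rev _ _
          rw [h2] at h1
          exact le_trans h1 (mul_le_mul_of_nonneg_right (hRσ (k+1)) (norm_nonneg _))
        have hwb : ∀ k, ‖w - q (k+1)‖ ≤ ‖w‖ + Rq := by
          intro k
          refine le_trans (norm_sub_le _ _) ?_
          exact add_le_add_right (hRq (k+1)) _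
        have hzb : ∀ k, ‖z - σ (k+1)‖ ≤ ‖z‖ + Rσ := by
          intro k
          refine le_trans (norm_sub_le _ _) ?_
          exact add_le_add_right (hRσ (k+1)) _
        have hb2 : ∀ k, |⟪σ k - σ (k+1), w - q (k+1)⟫| ≤ ‖σ k - σ (k+1)‖ * (‖w‖ + Rq) := by
          intro k
          refine le_trans (abs_real_inner_le_norm _ _) ?_
          exact mul_le_mul_of_nonneg_left (hwb k) (norm_nonneg _)
        have hb3 : ∀ k, |⟪q k - q (k+1), w - q (k+1)⟫ / τ₂| ≤
            ‖q k - q (k+1)‖ * (‖w‖ + Rq) / τ₂ := by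
          intro k
          rw [abs_div, abs_of_pos hτ₂]
          apply div_le_div_of_nonneg_right ?_ hτ₂.le
          refine le_trans (abs_real_inner_le_norm _ _) ?_
          exact mul_le_mul_of_nonneg_left (hwb k) (norm_nonneg _)
        have hb4 : ∀ k, |⟪σ k - σ (k+1), z - σ (k+1)⟫ / τ₁| ≤
            ‖σ k - σ (k+1)‖ * (‖z‖ + Rσ) / τ₁ := by
          intro k
          rw [abs_div, abs_of_pos hτ₁]
          apply div_le_div_of_nonneg_right ?_ hτ₁.le
          refine le_trans (abs_real_inner_le_norm _ _) ?_
          exact mul_le_mul_of_nonneg_left (hzb k) (norm_nonneg _)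
        apply squeeze_zero_norm (a := fun k =>
          ((‖w‖ + Rq) + (‖z‖ + Rσ) / τ₁) * ‖σ k - σ (k+1)‖
            + (Rσ + (‖w‖ + Rq) / τ₂) * ‖q k - q (k+1)‖)
        · intro k
          rw [Real.norm_eq_abs]
          have habs : ∀ p r s' t' : ℝ, |p + r - s' - t'| ≤ |p| + |r| + |s'| + |t'| := by
            intro p r s' t'
            rw [abs_le]
            constructor
            · nlinarith [neg_abs_le p, le_abs_self p, neg_abs_le r, le_abs_self r,
                neg_abs_le s', le_abs_self s', neg_abs_le t', le_abs_self t']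
            · nlinarith [neg_abs_le p, le_abs_self p, neg_abs_le r, le_abs_self r,
                neg_abs_le s', le_abs_self s', neg_abs_le t', le_abs_self t']
          refine le_trans (habs _ _ _ _) ?_
          have b1 := hb1 k
          have b2 := hb2 k
          have b3 := hb3 k
          have b4 := hb4 k
          have e3 : ‖q k - q (k+1)‖ * (‖w‖ + Rq) / τ₂ = ((‖w‖ + Rq) / τ₂) * ‖q k - q (k+1)‖ := by
            ring
          have e4 : ‖σ k - σ (k+1)‖ * (‖z‖ + Rσ) / τ₁ = ((‖z‖ + Rσ) / τ₁) * ‖σ k - σ (k+1)‖ := by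
            ring
          rw [e3] at b3
          rw [e4] at b4
          nlinarith [norm_nonneg (σ k - σ (k+1)), norm_nonneg (q k - q (k+1))]
        · have h1 := hd0.const_mul ((‖w‖ + Rq) + (‖z‖ + Rσ) / τ₁)
          have h2 := he0.const_mul (Rσ + (‖w‖ + Rq) / τ₂)
          have := h1.add h2
          simpa using this
      -- pass to the limit along U
      have hshiftσ : Tendsto (fun k => ⟪σ (k+1), w⟫) U (nhds ⟪σs, w⟫) := by
        have h1 : Tendsto (fun k => ⟪σ k, w⟫) U (nhds ⟪σs, w⟫) := hσs w
        have h2 : Tendsto (fun k => ⟪σ k - σ (k+1), w⟫) U (nhds 0) := by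
          refine Tendsto.mono_left ?_ hU
          apply squeeze_zero_norm (a := fun k => ‖σ k - σ (k+1)‖ * ‖w‖)
            (fun k => by rw [Real.norm_eq_abs]; exact abs_real_inner_le_norm _ _)
          simpa using hd0.mul_const ‖w‖
        have h3 := h1.sub h2
        rw [sub_zero] at h3
        refine h3.congr fun k => ?_
        simp [inner_sub_left]
      have hlhs : Tendsto (fun k => ⟪σ (k+1), w⟫ - ⟪q k, z⟫) U
          (nhds (⟪σs, w⟫ - ⟪qs, z⟫)) := hshiftσ.sub (hqs z)
      have herrU : Tendsto (fun k => ⟪σ (k+1), q (k+1) - q k⟫ + ⟪σ k - σ (k+1), w - q (k+1)⟫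
          - ⟪q k - q (k+1), w - q (k+1)⟫ / τ₂
          - ⟪σ k - σ (k+1), z - σ (k+1)⟫ / τ₁) U (nhds 0) := herr.mono_left hU
      have := le_of_tendsto_of_tendsto' hlhs herrU hper
      linarith
    have hsad1' : ∀ q' ∈ K, ⟪q', σs⟫ ≤ ⟪qs, σs⟫ := by
      intro q' hq'
      have := hsadlim σs hmemC q' hq'
      rwa [real_inner_comm q' σs] at this
    have hsad2' : ∀ σ' ∈ C, ⟪qs, σs⟫ ≤ ⟪qs, σ'⟫ := by
      intro σ' hσ'
      have := hsadlim σ' hσ' qs hmemK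
      rwa [real_inner_comm qs σs] at this
    exact ⟨σs, qs, hmemC, hmemK, hsad1', hsad2', hσs, hqs⟩
  -- extract the limit along a fixed ultrafilter extending atTop
  obtain ⟨σs, qs, hC1, hK1, hsA1, hsA2, hσU, hqU⟩ :=
    hmain (Ultrafilter.of atTop) (Ultrafilter.of_le _)
  have hUle : ↑(Ultrafilter.of (atTop : Filter ℕ)) ≤ (atTop : Filter ℕ) := Ultrafilter.of_le _
  obtain ⟨L1, hL1, -⟩ := hDconv σs hC1 qs hK1 hsA1 hsA2
  -- all ultrafilter limits agree
  have huniq : ∀ (V : Ultrafilter ℕ), ↑V ≤ (atTop : Filter ℕ) → ∀ σt qt : H, σt ∈ C → qt ∈ K →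
      (∀ q' ∈ K, ⟪q', σt⟫ ≤ ⟪qt, σt⟫) → (∀ σ' ∈ C, ⟪qt, σt⟫ ≤ ⟪qt, σ'⟫) →
      (∀ y : H, Tendsto (fun k => ⟪σ k, y⟫) V (nhds ⟪σt, y⟫)) →
      (∀ y : H, Tendsto (fun k => ⟪q k, y⟫) V (nhds ⟪qt, y⟫)) → σt = σs ∧ qt = qs := by
    intro V hV σt qt htC htK ht1 ht2 hσV hqV
    obtain ⟨L2, hL2, -⟩ := hDconv σt htC qt htK ht1 ht2
    have gform : ∀ (x p : H), pdQ τ₁ τ₂ (x - σs) (p - qs) - pdQ τ₁ τ₂ (x - σt) (p - qt)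
        = (τ₂ * (‖σs‖ ^ 2 - ‖σt‖ ^ 2) + τ₁ * (‖qs‖ ^ 2 - ‖qt‖ ^ 2)
            - 2 * (τ₁ * τ₂) * (⟪σs, qs⟫ - ⟪σt, qt⟫))
          + (-2 * τ₂) * ⟪x, σs⟫ + 2 * τ₂ * ⟪x, σt⟫ + (-2 * τ₁) * ⟪p, qs⟫ + 2 * τ₁ * ⟪p, qt⟫
          + 2 * (τ₁ * τ₂) * (⟪x, qs⟫ + ⟪p, σs⟫ - ⟪x, qt⟫ - ⟪p, σt⟫) := by
      intro x p
      have c1 : ⟪σs, x⟫ = ⟪x, σs⟫ := real_inner_comm _ _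
      have c2 : ⟪σt, x⟫ = ⟪x, σt⟫ := real_inner_comm _ _
      have c3 : ⟪qs, p⟫ = ⟪p, qs⟫ := real_inner_comm _ _
      have c4 : ⟪qt, p⟫ = ⟪p, qt⟫ := real_inner_comm _ _
      have c5 : ⟪σs, p⟫ = ⟪p, σs⟫ := real_inner_comm _ _
      have c6 : ⟪σt, p⟫ = ⟪p, σt⟫ := real_inner_comm _ _
      simp only [pdQ, ← real_inner_self_eq_norm_sq, inner_sub_left, inner_sub_right,
        c1, c2, c3, c4, c5, c6]
      ring
    have hgat : Tendsto (fun k => pdQ τ₁ τ₂ (σ k - σs) (q k - qs)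
        - pdQ τ₁ τ₂ (σ k - σt) (q k - qt)) atTop (nhds (L1 - L2)) := hL1.sub hL2
    have mklim : ∀ (W : Ultrafilter ℕ) (σw qw : H),
        (∀ y : H, Tendsto (fun k => ⟪σ k, y⟫) W (nhds ⟪σw, y⟫)) →
        (∀ y : H, Tendsto (fun k => ⟪q k, y⟫) W (nhds ⟪qw, y⟫)) →
        Tendsto (fun k => pdQ τ₁ τ₂ (σ k - σs) (q k - qs) - pdQ τ₁ τ₂ (σ k - σt) (q k - qt)) W
          (nhds ((τ₂ * (‖σs‖ ^ 2 - ‖σt‖ ^ 2) + τ₁ * (‖qs‖ ^ 2 - ‖qt‖ ^ 2)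
            - 2 * (τ₁ * τ₂) * (⟪σs, qs⟫ - ⟪σt, qt⟫))
          + (-2 * τ₂) * ⟪σw, σs⟫ + 2 * τ₂ * ⟪σw, σt⟫ + (-2 * τ₁) * ⟪qw, qs⟫ + 2 * τ₁ * ⟪qw, qt⟫
          + 2 * (τ₁ * τ₂) * (⟪σw, qs⟫ + ⟪qw, σs⟫ - ⟪σw, qt⟫ - ⟪qw, σt⟫))) := by
      intro W σw qw hσW hqW
      have t0 : Tendsto (fun _ : ℕ => (τ₂ * (‖σs‖ ^ 2 - ‖σt‖ ^ 2) + τ₁ * (‖qs‖ ^ 2 - ‖qt‖ ^ 2)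
          - 2 * (τ₁ * τ₂) * (⟪σs, qs⟫ - ⟪σt, qt⟫))) (↑W) (nhds _) := tendsto_const_nhds
      have t1 := ((((t0.add ((hσW σs).const_mul (-2 * τ₂))).add
        ((hσW σt).const_mul (2 * τ₂))).add ((hqW qs).const_mul (-2 * τ₁))).add
        ((hqW qt).const_mul (2 * τ₁))).add
        (((((hσW qs).add (hqW σs)).sub (hσW qt)).sub (hqW σt)).const_mul (2 * (τ₁ * τ₂)))
      refine Tendsto.congr (fun k => ?_) t1
      exact (gform (σ k) (q k)).symm
    have e1 := tendsto_nhds_unique (mklim (Ultrafilter.of atTop) σs qs hσU hqU)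
      (hgat.mono_left hUle)
    have e2 := tendsto_nhds_unique (mklim V σt qt hσV hqV) (hgat.mono_left hV)
    have hQ0 : pdQ τ₁ τ₂ (σs - σt) (qs - qt) = 0 := by
      have h := e2.trans e1.symm
      have c1 : ⟪σt, σs⟫ = ⟪σs, σt⟫ := real_inner_comm _ _
      have c2 : ⟪qt, qs⟫ = ⟪qs, qt⟫ := real_inner_comm _ _
      have c3 : ⟪qs, σs⟫ = ⟪σs, qs⟫ := real_inner_comm _ _
      have c4 : ⟪qs, σt⟫ = ⟪σt, qs⟫ := real_inner_comm _ _
      have c5 : ⟪qt, σs⟫ = ⟪σs, qt⟫ := real_inner_comm _ _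
      have c6 : ⟪qt, σt⟫ = ⟪σt, qt⟫ := real_inner_comm _ _
      simp only [pdQ, ← real_inner_self_eq_norm_sq, inner_sub_left, inner_sub_right,
        c1, c2, c3, c4, c5, c6] at h ⊢
      linarith
    have h1 := (hnormsq (σs - σt) (qs - qt)).1
    have h2 := (hnormsq (σs - σt) (qs - qt)).2
    rw [hQ0] at h1 h2
    have hσeq : σt = σs := by
      have hle : ‖σs - σt‖ ^ 2 ≤ 0 := by
        by_contra hcon
        push_neg at hcon
        linarith [mul_pos hc2 hcon]
      have h0 : ‖σs - σt‖ ^ 2 = 0 := le_antisymm hle (sq_nonneg _)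
      have h0' : ‖σs - σt‖ = 0 := by
        have := pow_eq_zero_iff (n := 2) (by norm_num) |>.mp h0
        exact this
      exact (sub_eq_zero.mp (norm_eq_zero.mp h0')).symm
    have hqeq : qt = qs := by
      have hle : ‖qs - qt‖ ^ 2 ≤ 0 := by
        by_contra hcon
        push_neg at hcon
        linarith [mul_pos hc1 hcon]
      have h0 : ‖qs - qt‖ ^ 2 = 0 := le_antisymm hle (sq_nonneg _)
      have h0' : ‖qs - qt‖ = 0 := by
        have := pow_eq_zero_iff (n := 2) (by norm_num) |>.mp h0
        exact this
      exact (sub_eq_zero.mp (norm_eq_zero.mp h0')).symm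
    exact ⟨hσeq, hqeq⟩
  refine ⟨σs, qs, hC1, hK1, fun q' hq' σ' hσ' => ⟨hsA1 q' hq', hsA2 σ' hσ'⟩, ?_, ?_⟩
  · intro y
    rw [tendsto_iff_ultrafilter]
    intro V hV
    obtain ⟨σt, qt, htC, htK, ht1, ht2, hσV, hqV⟩ := hmain V hV
    obtain ⟨he1, he2⟩ := huniq V hV σt qt htC htK ht1 ht2 hσV hqV
    rw [← he1]
    exact hσV y
  · intro y
    rw [tendsto_iff_ultrafilter]
    intro V hV
    obtain ⟨σt, qt, htC, htK, ht1, ht2, hσV, hqV⟩ := hmain V hV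
    obtain ⟨he1, he2⟩ := huniq V hV σt qt htC htK ht1 ht2 hσV hqV
    rw [← he2]
    exact hqV y
end

section
/- Let d ≥ 1 and let (ā, b̄) ∈ ℝ × ℝ^d with ā + |b̄|²/2 > 0 and b̄ ≠ 0, where |·| is the Euclidean norm. Let μ > 0 be the largest real root of the cubic polynomial p(x) = x³/2 + (ā + 1)x − |b̄|. Then the point (−μ²/2, μ b̄/|b̄|) belongs to K and is the unique nearest point of K to (ā, b̄) in the Euclidean norm of ℝ^{1+d}; that is, it equals the metric projection of (ā, b̄) onto K. -/
noncomputable section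

/-- The Euclidean distance on `ℝ^{1+d} = ℝ × ℝ^d`. -/
def euclDist {d : ℕ} (p q : ℝ × EuclideanSpace ℝ (Fin d)) : ℝ :=
  Real.sqrt ((p.1 - q.1) ^ 2 + ‖p.2 - q.2‖ ^ 2)

set_option maxHeartbeats 1000000 in
/-- If `ā + |b̄|²/2 > 0` and `b̄ ≠ 0`, and `μ > 0` is the largest real root of
`p(x) = x³/2 + (ā+1)x − |b̄|`, then `(−μ²/2, μ b̄/|b̄|)` belongs to `K` and is the unique
nearest point of `K` to `(ā, b̄)` in the Euclidean norm of `ℝ^{1+d}`, i.e. it is the metric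
projection of `(ā, b̄)` onto `K`. -/
theorem projection_onto_K {d : ℕ} (hd : 1 ≤ d)
    (a : ℝ) (b : EuclideanSpace ℝ (Fin d))
    (hK : 0 < a + ‖b‖ ^ 2 / 2) (hb : b ≠ 0)
    (μ : ℝ) (hμ : 0 < μ) (hroot : μ ^ 3 / 2 + (a + 1) * μ - ‖b‖ = 0)
    (hmax : ∀ y : ℝ, y ^ 3 / 2 + (a + 1) * y - ‖b‖ = 0 → y ≤ μ) :
    (-(μ ^ 2) / 2, (μ / ‖b‖) • b) ∈ Kset d ∧
    (∀ p ∈ Kset d,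
      euclDist (-(μ ^ 2) / 2, (μ / ‖b‖) • b) (a, b) ≤ euclDist p (a, b)) ∧
    (∀ p ∈ Kset d,
      (∀ p' ∈ Kset d, euclDist p (a, b) ≤ euclDist p' (a, b)) →
      p = (-(μ ^ 2) / 2, (μ / ‖b‖) • b)) := by
  set β := ‖b‖ with hβdef
  have hβ : 0 < β := norm_pos_iff.mpr hb
  -- the root relation: μ * (a + μ²/2) = β - μ
  have hkey : μ * (a + μ ^ 2 / 2) = β - μ := by nlinarith [hroot]
  -- β > μ, hence a + μ²/2 > 0
  have hβμ : μ < β := by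
    by_contra h
    push_neg at h
    have h6 : a + μ ^ 2 / 2 ≤ 0 := by
      by_contra h7
      push_neg at h7
      nlinarith [mul_pos hμ h7]
    nlinarith [mul_self_le_mul_self hβ.le h]
  have hα : 0 < a + μ ^ 2 / 2 := by
    have := hkey
    nlinarith
  -- norm of the second component
  have hq2 : ‖(μ / β) • b‖ = μ := by
    rw [norm_smul, Real.norm_eq_abs, abs_of_pos (div_pos hμ hβ)]
    field_simp
    exact hβdef.symm
  have hmem : (-(μ ^ 2) / 2, (μ / ‖b‖) • b) ∈ Kset d := by
    simp only [Kset, Set.mem_setOf_eq]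
    rw [← hβdef, hq2]
    ring_nf
    exact le_rfl

  -- squared distance comparison, with the strong form
  have key : ∀ c : ℝ, ∀ v : EuclideanSpace ℝ (Fin d), c + ‖v‖ ^ 2 / 2 ≤ 0 →
      (-(μ ^ 2) / 2 - a) ^ 2 + ‖(μ / β) • b - b‖ ^ 2
        + ((c - -(μ ^ 2) / 2) ^ 2 + ‖v - (μ / β) • b‖ ^ 2)
      ≤ (c - a) ^ 2 + ‖v - b‖ ^ 2 := by
    intro c v hcv
    set t : ℝ := inner ℝ b v with ht
    set n := ‖v‖ with hn
    have hn0 : 0 ≤ n := norm_nonneg v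
    have hCS : t ≤ β * n := real_inner_le_norm b v
    have e1 : ‖v - b‖ ^ 2 = n ^ 2 - 2 * t + β ^ 2 := by
      rw [norm_sub_sq_real, real_inner_comm]
    have e2 : ‖v - (μ / β) • b‖ ^ 2 = n ^ 2 - 2 * (μ / β) * t + μ ^ 2 := by
      rw [norm_sub_sq_real, real_inner_smul_right, real_inner_comm, hq2]
      ring
    have e3 : ‖(μ / β) • b - b‖ ^ 2 = (μ - β) ^ 2 := by
      have : (μ / β) • b - b = ((μ - β) / β) • b := by
        rw [sub_div, div_self hβ.ne', sub_smul, one_smul]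
      rw [this, norm_smul, Real.norm_eq_abs]
      rw [mul_pow, sq_abs]
      field_simp
      rw [← hβdef]
      ring
    rw [e1, e2, e3]
    -- the inner-product condition: I ≤ 0
    have h1 : c - μ ^ 2 / 2 + (μ / β) * t ≤ 0 := by
      have h2 : (μ / β) * t ≤ (μ / β) * (β * n) :=
        mul_le_mul_of_nonneg_left hCS (le_of_lt (div_pos hμ hβ))
      have h3 : (μ / β) * (β * n) = μ * n := by
        field_simp
      nlinarith [sq_nonneg (n - μ)]
    have hI : (a + μ ^ 2 / 2) * (c + μ ^ 2 / 2) + (1 - μ / β) * (t - μ * β) ≤ 0 := by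
      have h4 : 1 - μ / β = μ * (a + μ ^ 2 / 2) / β := by
        rw [hkey, sub_div, div_self hβ.ne']
      rw [h4]
      have h5 : (a + μ ^ 2 / 2) * (c + μ ^ 2 / 2) + μ * (a + μ ^ 2 / 2) / β * (t - μ * β)
          = (a + μ ^ 2 / 2) * ((c - μ ^ 2 / 2 + (μ / β) * t)) := by
        field_simp
        ring
      rw [h5]
      exact mul_nonpos_of_nonneg_of_nonpos hα.le h1
    have hid : (c - a) ^ 2 + (n ^ 2 - 2 * t + β ^ 2)
        - ((-(μ ^ 2) / 2 - a) ^ 2 + (μ - β) ^ 2 + (c - -(μ ^ 2) / 2) ^ 2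
          + (n ^ 2 - 2 * (μ / β) * t + μ ^ 2))
        = -2 * ((a + μ ^ 2 / 2) * (c + μ ^ 2 / 2) + (1 - μ / β) * (t - μ * β)) := by
      field_simp
      ring
    linarith [hid, hI]
  refine ⟨hmem, ?_, ?_⟩
  · rintro ⟨c, v⟩ hp
    have h := key c v hp
    unfold euclDist
    dsimp only
    apply Real.sqrt_le_sqrt
    linarith [sq_nonneg (c - -(μ ^ 2) / 2), sq_nonneg ‖v - (μ / β) • b‖]
  · rintro ⟨c, v⟩ hp hmin
    have h := key c v hp
    have h1 : euclDist (c, v) (a, b) ≤ euclDist (-(μ ^ 2) / 2, (μ / β) • b) (a, b) :=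
      hmin _ hmem
    have h2 : euclDist (-(μ ^ 2) / 2, (μ / β) • b) (a, b) ≤ euclDist (c, v) (a, b) := by
      unfold euclDist
      dsimp only
      apply Real.sqrt_le_sqrt
      linarith [sq_nonneg (c - -(μ ^ 2) / 2), sq_nonneg ‖v - (μ / β) • b‖]
    unfold euclDist at h1
    dsimp only at h1
    have hB : (0:ℝ) ≤ (-(μ ^ 2) / 2 - a) ^ 2 + ‖(μ / β) • b - b‖ ^ 2 := by positivity
    have hAB : (c - a) ^ 2 + ‖v - b‖ ^ 2
        ≤ (-(μ ^ 2) / 2 - a) ^ 2 + ‖(μ / β) • b - b‖ ^ 2 :=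
      (Real.sqrt_le_sqrt_iff hB).mp h1
    have hz : (c - -(μ ^ 2) / 2) ^ 2 + ‖v - (μ / β) • b‖ ^ 2 ≤ 0 := by linarith
    have hc : c = -(μ ^ 2) / 2 := by
      nlinarith [sq_nonneg (c - -(μ ^ 2) / 2), sq_nonneg ‖v - (μ / β) • b‖]
    have hv : v = (μ / β) • b := by
      have h4 : ‖v - (μ / β) • b‖ ^ 2 ≤ 0 := by nlinarith [sq_nonneg (c - -(μ ^ 2) / 2)]
      have h0 : ‖v - (μ / β) • b‖ = 0 := by
        nlinarith [norm_nonneg (v - (μ / β) • b)]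
      rw [norm_eq_zero, sub_eq_zero] at h0
      exact h0
    exact Prod.ext hc hv
end
end

section
/- Let Ω ⊂ ℝ^N be compact, equipped with Lebesgue measure, let d ≥ 1 and set n = 1 + d. For every σ ∈ L²(Ω; ℝ^n), the supremum of ∫_Ω q · σ over continuous functions q : Ω → ℝ^n with q(x) ∈ K for all x ∈ Ω equals the supremum of ∫_Ω q · σ over q ∈ L²(Ω; ℝ^n) with q(x) ∈ K for a.e. x ∈ Ω, where both suprema are taken in [0,+∞]. -/
open MeasureTheory ENNReal NNReal

noncomputable section

lemma exists_convex_proj {F : Type*} [NormedAddCommGroup F] [InnerProductSpace ℝ F]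
    [CompleteSpace F] {K : Set F} (hne : K.Nonempty) (hcl : IsClosed K) (hconv : Convex ℝ K) :
    ∃ P : F → F, (∀ x, P x ∈ K) ∧ (∀ x ∈ K, P x = x) ∧ LipschitzWith 1 P := by
  have hcomp : IsComplete K := hcl.isComplete
  choose P hPmem hPnorm using exists_norm_eq_iInf_of_complete_convex hne hcomp hconv
  have hchar : ∀ x, ∀ w ∈ K, (inner ℝ (x - P x) (w - P x) : ℝ) ≤ 0 := fun x =>
    (norm_eq_iInf_iff_real_inner_le_zero hconv (hPmem x)).1 (hPnorm x)
  refine ⟨P, hPmem, ?_, ?_⟩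
  · intro x hx
    have h1 := hchar x x hx
    have h2 : (0:ℝ) ≤ (inner ℝ (x - P x) (x - P x) : ℝ) := real_inner_self_nonneg
    have h3 : (inner ℝ (x - P x) (x - P x) : ℝ) = 0 := le_antisymm h1 h2
    have := inner_self_eq_zero (𝕜 := ℝ).1 h3
    rwa [sub_eq_zero, eq_comm] at this
  · refine LipschitzWith.of_dist_le_mul fun x y => ?_
    rw [NNReal.coe_one, one_mul, dist_eq_norm, dist_eq_norm]
    by_cases h : P x = P y
    · simp [h]
    have h1 := hchar x (P y) (hPmem y)
    have h2 := hchar y (P x) (hPmem x)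
    have key : ‖P x - P y‖ ^ 2 ≤ (inner ℝ (x - y) (P x - P y) : ℝ) := by
      have e1 : (inner ℝ (x - P x) (P y - P x) : ℝ) + (inner ℝ (y - P y) (P x - P y) : ℝ) ≤ 0 := by
        linarith
      have e2 : (inner ℝ (x - P x) (P y - P x) : ℝ) = -(inner ℝ (x - P x) (P x - P y) : ℝ) := by
        rw [← inner_neg_right, neg_sub]
      have e3 : (inner ℝ (x - P x) (P x - P y) : ℝ) + (inner ℝ (P y - y) (P x - P y) : ℝ) ≥ 0 := by
        rw [e2] at e1
        have h4 : (inner ℝ (y - P y) (P x - P y) : ℝ) = -(inner ℝ (P y - y) (P x - P y) : ℝ) := by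
          rw [← inner_neg_left, neg_sub]
        rw [h4] at e1; linarith
      have expand : (inner ℝ (x - y) (P x - P y) : ℝ)
          = (inner ℝ (x - P x) (P x - P y) : ℝ) + (inner ℝ (P x - P y) (P x - P y) : ℝ)
            + (inner ℝ (P y - y) (P x - P y) : ℝ) := by
        rw [← inner_add_left, ← inner_add_left]; congr 1; abel
      have hs : (inner ℝ (P x - P y) (P x - P y) : ℝ) = ‖P x - P y‖ ^ 2 :=
        real_inner_self_eq_norm_sq _
      linarith
    have cs : (inner ℝ (x - y) (P x - P y) : ℝ) ≤ ‖x - y‖ * ‖P x - P y‖ := real_inner_le_norm _ _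
    have hpos : 0 < ‖P x - P y‖ := by rw [norm_pos_iff]; exact sub_ne_zero.2 h
    nlinarith [norm_nonneg (x - y)]

lemma convex_Kset (d : ℕ) : Convex ℝ (Kset d) := by
  intro p hp q hq a b ha hb hab
  simp only [Kset, Set.mem_setOf_eq] at *
  have hfst : (a • p + b • q).1 = a * p.1 + b * q.1 := rfl
  have hsnd : (a • p + b • q).2 = a • p.2 + b • q.2 := rfl
  rw [hfst, hsnd]
  have h2 : ‖a • p.2 + b • q.2‖ ≤ a * ‖p.2‖ + b * ‖q.2‖ := by
    calc ‖a • p.2 + b • q.2‖ ≤ ‖a • p.2‖ + ‖b • q.2‖ := norm_add_le _ _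
    _ = a * ‖p.2‖ + b * ‖q.2‖ := by
        rw [norm_smul, norm_smul, Real.norm_of_nonneg ha, Real.norm_of_nonneg hb]
  have hn : ‖a • p.2 + b • q.2‖ ^ 2 ≤ (a * ‖p.2‖ + b * ‖q.2‖) ^ 2 :=
    pow_le_pow_left₀ (norm_nonneg _) h2 2
  have hpa : a * (p.1 + ‖p.2‖ ^ 2 / 2) ≤ 0 := mul_nonpos_iff.2 (Or.inl ⟨ha, hp⟩)
  have hqb : b * (q.1 + ‖q.2‖ ^ 2 / 2) ≤ 0 := mul_nonpos_iff.2 (Or.inl ⟨hb, hq⟩)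
  nlinarith [mul_nonneg (mul_nonneg ha hb) (sq_nonneg (‖p.2‖ - ‖q.2‖)), hpa, hqb, hn, hab]

lemma isClosed_Kset (d : ℕ) : IsClosed (Kset d) :=
  isClosed_le (continuous_fst.add ((continuous_snd.norm.pow 2).div_const 2)) continuous_const

set_option maxHeartbeats 1000000 in
/-- For `σ ∈ L²(Ω; ℝ^{1+d})` on a compact set `Ω ⊂ ℝ^N` with Lebesgue measure, the supremum
(in `[0,∞]`) of `∫_Ω q·σ` over continuous `q` with values in `K` equals the supremum over
`q ∈ L²(Ω; ℝ^{1+d})` with values a.e. in `K`. -/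
theorem sup_continuous_eq_sup_L2 {N : ℕ} (Ω : Set (EuclideanSpace ℝ (Fin N)))
    (hΩ : IsCompact Ω) {d : ℕ} (hd : 1 ≤ d)
    (σ : EuclideanSpace ℝ (Fin N) → ℝ × EuclideanSpace ℝ (Fin d))
    (hσ : MemLp σ 2 (volume.restrict Ω)) :
    (⨆ (q : EuclideanSpace ℝ (Fin N) → ℝ × EuclideanSpace ℝ (Fin d))
        (_ : ContinuousOn q Ω ∧ ∀ x ∈ Ω, q x ∈ Kset d),
      ENNReal.ofReal (∫ x in Ω, ((q x).1 * (σ x).1 + ∑ i, (q x).2 i * (σ x).2 i)))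
    =
    ⨆ (q : EuclideanSpace ℝ (Fin N) → ℝ × EuclideanSpace ℝ (Fin d))
        (_ : MemLp q 2 (volume.restrict Ω) ∧ ∀ᵐ x ∂(volume.restrict Ω), q x ∈ Kset d),
      ENNReal.ofReal (∫ x in Ω, ((q x).1 * (σ x).1 + ∑ i, (q x).2 i * (σ x).2 i)) := by
  classical
  have hΩm : MeasurableSet Ω := hΩ.measurableSet
  haveI hfin : IsFiniteMeasure (volume.restrict Ω) :=
    ⟨by rw [Measure.restrict_apply_univ]; exact hΩ.measure_lt_top⟩
  have mem_of_cont : ∀ f : EuclideanSpace ℝ (Fin N) → ℝ × EuclideanSpace ℝ (Fin d),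
      ContinuousOn f Ω → MemLp f 2 (volume.restrict Ω) := by
    intro f hf
    obtain ⟨C, hC⟩ := hΩ.exists_bound_of_continuousOn hf
    exact MemLp.of_bound (hf.aestronglyMeasurable hΩm) C
      ((ae_restrict_iff' hΩm).2 (ae_of_all _ hC))
  apply le_antisymm
  · exact iSup₂_le fun q hq => le_iSup₂_of_le q ⟨mem_of_cont q hq.1,
      (ae_restrict_iff' hΩm).2 (ae_of_all _ hq.2)⟩ le_rfl
  · refine iSup₂_le fun q hq => ?_
    set μ := volume.restrict Ω with hμdef
    haveI : (volume : Measure (EuclideanSpace ℝ (Fin N))).WeaklyRegular :=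
      MeasureTheory.Measure.Regular.weaklyRegular
    haveI hwr : μ.WeaklyRegular :=
      MeasureTheory.Measure.WeaklyRegular.restrict_of_measure_ne_top hΩ.measure_lt_top.ne
    let e : WithLp 2 (ℝ × EuclideanSpace ℝ (Fin d)) ≃L[ℝ] ℝ × EuclideanSpace ℝ (Fin d) :=
      WithLp.prodContinuousLinearEquiv 2 ℝ ℝ (EuclideanSpace ℝ (Fin d))
    have hpt : ∀ p z : ℝ × EuclideanSpace ℝ (Fin d),
        (inner ℝ (e.symm p) (e.symm z) : ℝ) = p.1 * z.1 + ∑ i, p.2 i * z.2 i := by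
      intro p z
      simp [e, WithLp.prod_inner_apply, PiLp.inner_apply, RCLike.inner_apply, WithLp.toLp_fst,
        WithLp.toLp_snd, WithLp.prodContinuousLinearEquiv_symm_apply, RCLike.conj_to_real]
      simp only [mul_comm]
    -- the projection onto (the `WithLp 2` copy of) `K`
    obtain ⟨P, hPmem, hPid, hPlip⟩ :=
      exists_convex_proj (K := ⇑e ⁻¹' Kset d)
        ⟨0, by simp [Kset, Set.mem_preimage]⟩
        ((isClosed_Kset d).preimage e.continuous)
        ((convex_Kset d).is_linear_preimage ⟨fun x y => map_add e x y, fun c x => map_smul e c x⟩)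
    set T : (ℝ × EuclideanSpace ℝ (Fin d)) → (ℝ × EuclideanSpace ℝ (Fin d)) :=
      fun z => e (P (e.symm z)) with hTdef
    have hTmem : ∀ z, T z ∈ Kset d := fun z => hPmem (e.symm z)
    have hTid : ∀ z ∈ Kset d, T z = z := by
      intro z hz
      have : e.symm z ∈ ⇑e ⁻¹' Kset d := by
        simp only [Set.mem_preimage, e.apply_symm_apply]; exact hz
      rw [hTdef]; simp only [hPid _ this, e.apply_symm_apply]
    obtain ⟨CT, hTlip⟩ : ∃ C : ℝ≥0, LipschitzWith C T :=
      ⟨_, ((e : WithLp 2 (ℝ × EuclideanSpace ℝ (Fin d)) →L[ℝ]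
          ℝ × EuclideanSpace ℝ (Fin d)).lipschitz).comp
        (hPlip.comp ((e.symm : (ℝ × EuclideanSpace ℝ (Fin d)) →L[ℝ]
          WithLp 2 (ℝ × EuclideanSpace ℝ (Fin d))).lipschitz))⟩
    set ιL : (ℝ × EuclideanSpace ℝ (Fin d)) →L[ℝ] WithLp 2 (ℝ × EuclideanSpace ℝ (Fin d)) :=
      (e.symm : (ℝ × EuclideanSpace ℝ (Fin d)) →L[ℝ]
        WithLp 2 (ℝ × EuclideanSpace ℝ (Fin d))) with hιdef
    have hσF : MemLp (⇑ιL ∘ σ) 2 μ := ιL.comp_memLp' hσ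
    set S : Lp (WithLp 2 (ℝ × EuclideanSpace ℝ (Fin d))) 2 μ := hσF.toLp _ with hSdef
    have pair_eq : ∀ (f : EuclideanSpace ℝ (Fin N) → ℝ × EuclideanSpace ℝ (Fin d))
        (hf : MemLp f 2 μ),
        (∫ x, ((f x).1 * (σ x).1 + ∑ i, (f x).2 i * (σ x).2 i) ∂μ)
          = (inner ℝ ((ιL.comp_memLp' hf).toLp _) S : ℝ) := by
      intro f hf
      rw [L2.inner_def]
      refine integral_congr_ae ?_
      filter_upwards [(ιL.comp_memLp' hf).coeFn_toLp, hσF.coeFn_toLp] with x h1 h2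
      rw [h1, h2]
      exact (hpt (f x) (σ x)).symm
    refine ENNReal.le_of_forall_pos_le_add fun ε hε _ => ?_
    set Cc : ℝ≥0 := ‖ιL‖₊ * CT with hCcdef
    set Cσ : ℝ := ‖S‖ with hCσdef
    have hCσ0 : 0 ≤ Cσ := norm_nonneg S
    have hden : (0:ℝ) < Cσ + 1 := by linarith
    set δ : ℝ≥0∞ := ENNReal.ofReal ((ε : ℝ) / (Cσ + 1)) / (Cc + 1) with hδdef
    have hnum0 : ENNReal.ofReal ((ε : ℝ) / (Cσ + 1)) ≠ 0 :=
      (ENNReal.ofReal_pos.2 (div_pos (by exact_mod_cast hε) hden)).ne'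
    have hδ0 : δ ≠ 0 :=
      (ENNReal.div_pos hnum0 (by simp [ENNReal.add_ne_top])).ne'
    obtain ⟨g, hg_close, hg_mem⟩ :=
      hq.1.exists_boundedContinuous_eLpNorm_sub_le (ENNReal.ofNat_ne_top) hδ0
    set q' : EuclideanSpace ℝ (Fin N) → ℝ × EuclideanSpace ℝ (Fin d) := T ∘ ⇑g with hq'def
    have hq'cont : Continuous q' := hTlip.continuous.comp g.continuous
    have hq'mem : ∀ x ∈ Ω, q' x ∈ Kset d := fun x _ => hTmem _
    have hq'ℒp : MemLp q' 2 μ := mem_of_cont q' hq'cont.continuousOn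
    set U : Lp (WithLp 2 (ℝ × EuclideanSpace ℝ (Fin d))) 2 μ :=
      (ιL.comp_memLp' hq'ℒp).toLp _ with hUdef
    set V : Lp (WithLp 2 (ℝ × EuclideanSpace ℝ (Fin d))) 2 μ :=
      (ιL.comp_memLp' hq.1).toLp _ with hVdef
    -- bound ‖V - U‖
    have hae : ⇑(V - U) =ᵐ[μ] fun x => ιL (q x) - ιL (q' x) := by
      filter_upwards [Lp.coeFn_sub V U, (ιL.comp_memLp' hq.1).coeFn_toLp,
        (ιL.comp_memLp' hq'ℒp).coeFn_toLp] with x h1 h2 h3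
      rw [h1, Pi.sub_apply, h2, h3]; rfl
    have hptbd : ∀ᵐ x ∂μ, ‖ιL (q x) - ιL (q' x)‖₊ ≤ Cc * ‖(q - ⇑g) x‖₊ := by
      filter_upwards [hq.2] with x hx
      have h1 : ιL (q x) - ιL (q' x) = ιL (q x - q' x) := (map_sub ιL _ _).symm
      have h2 : ‖q x - q' x‖ ≤ (CT : ℝ) * ‖q x - g x‖ := by
        have h3 := hTlip.dist_le_mul (q x) (g x)
        rw [dist_eq_norm, dist_eq_norm] at h3
        calc ‖q x - q' x‖ = ‖T (q x) - T (g x)‖ := by rw [hTid (q x) hx]; rfl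
        _ ≤ (CT : ℝ) * ‖q x - g x‖ := h3
      have h4 : ‖ιL (q x) - ιL (q' x)‖ ≤ (Cc : ℝ) * ‖(q - ⇑g) x‖ := by
        rw [h1]
        calc ‖ιL (q x - q' x)‖ ≤ ‖ιL‖ * ‖q x - q' x‖ := ιL.le_opNorm _
        _ ≤ ‖ιL‖ * ((CT : ℝ) * ‖q x - g x‖) :=
          mul_le_mul_of_nonneg_left h2 (norm_nonneg _)
        _ = (Cc : ℝ) * ‖(q - ⇑g) x‖ := by
          rw [Pi.sub_apply, hCcdef]; push_cast [coe_nnnorm]; ring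
      exact_mod_cast h4
    have hVU : ‖V - U‖ ≤ (ε : ℝ) / (Cσ + 1) := by
      have e1 : eLpNorm (fun x => ιL (q x) - ιL (q' x)) 2 μ ≤ Cc • eLpNorm (q - ⇑g) 2 μ :=
        eLpNorm_le_nnreal_smul_eLpNorm_of_ae_le_mul hptbd 2
      have e2 : eLpNorm (fun x => ιL (q x) - ιL (q' x)) 2 μ
          ≤ ENNReal.ofReal ((ε : ℝ) / (Cσ + 1)) := by
        calc eLpNorm (fun x => ιL (q x) - ιL (q' x)) 2 μ ≤ Cc • eLpNorm (q - ⇑g) 2 μ := e1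
        _ = (Cc : ℝ≥0∞) * eLpNorm (q - ⇑g) 2 μ := by rw [ENNReal.smul_def, smul_eq_mul]
        _ ≤ ((Cc : ℝ≥0∞) + 1) * δ := by
            apply mul_le_mul' (le_add_of_le_of_nonneg le_rfl zero_le_one) hg_close
        _ = ENNReal.ofReal ((ε : ℝ) / (Cσ + 1)) := by
            rw [hδdef]
            exact ENNReal.mul_div_cancel' (by simp) (by simp [ENNReal.add_ne_top])
      have e3 : ‖V - U‖ = (eLpNorm (fun x => ιL (q x) - ιL (q' x)) 2 μ).toReal := by
        rw [Lp.norm_def, eLpNorm_congr_ae hae]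
      rw [e3]
      calc (eLpNorm (fun x => ιL (q x) - ιL (q' x)) 2 μ).toReal
          ≤ (ENNReal.ofReal ((ε : ℝ) / (Cσ + 1))).toReal :=
            ENNReal.toReal_mono ENNReal.ofReal_ne_top e2
      _ = (ε : ℝ) / (Cσ + 1) := ENNReal.toReal_ofReal (le_of_lt (div_pos
            (by exact_mod_cast hε) hden))
    -- conclude
    have key : (∫ x, ((q x).1 * (σ x).1 + ∑ i, (q x).2 i * (σ x).2 i) ∂μ)
        ≤ (∫ x, ((q' x).1 * (σ x).1 + ∑ i, (q' x).2 i * (σ x).2 i) ∂μ) + (ε : ℝ) := by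
      rw [pair_eq q hq.1, pair_eq q' hq'ℒp]
      have hsub : (inner ℝ V S : ℝ) - (inner ℝ U S : ℝ) = (inner ℝ (V - U) S : ℝ) :=
        (inner_sub_left V U S).symm
      have habs : |(inner ℝ (V - U) S : ℝ)| ≤ ‖V - U‖ * ‖S‖ := abs_real_inner_le_norm _ _
      have hmul : ‖V - U‖ * ‖S‖ ≤ (ε : ℝ) := by
        have h5 : ‖V - U‖ * ‖S‖ ≤ ((ε : ℝ) / (Cσ + 1)) * Cσ :=
          mul_le_mul_of_nonneg_right hVU (norm_nonneg S)
        have h6 : ((ε : ℝ) / (Cσ + 1)) * (Cσ + 1) = (ε : ℝ) := div_mul_cancel₀ _ hden.ne'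
        have h7 : 0 ≤ (ε : ℝ) / (Cσ + 1) := le_of_lt (div_pos (by exact_mod_cast hε) hden)
        nlinarith
      have := (abs_le.1 habs).2
      linarith [hsub ▸ this, hmul]
    calc ENNReal.ofReal (∫ x, ((q x).1 * (σ x).1 + ∑ i, (q x).2 i * (σ x).2 i) ∂μ)
        ≤ ENNReal.ofReal ((∫ x, ((q' x).1 * (σ x).1 + ∑ i, (q' x).2 i * (σ x).2 i) ∂μ) + (ε : ℝ)) :=
          ENNReal.ofReal_le_ofReal key
    _ ≤ ENNReal.ofReal (∫ x, ((q' x).1 * (σ x).1 + ∑ i, (q' x).2 i * (σ x).2 i) ∂μ)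
          + ENNReal.ofReal (ε : ℝ) := ENNReal.ofReal_add_le
    _ ≤ (⨆ (q : EuclideanSpace ℝ (Fin N) → ℝ × EuclideanSpace ℝ (Fin d))
          (_ : ContinuousOn q Ω ∧ ∀ x ∈ Ω, q x ∈ Kset d),
          ENNReal.ofReal (∫ x, ((q x).1 * (σ x).1 + ∑ i, (q x).2 i * (σ x).2 i) ∂μ)) + ↑ε := by
        refine add_le_add ?_ (by simp)
        exact le_iSup₂_of_le q' ⟨hq'cont.continuousOn, hq'mem⟩ le_rfl

end
end
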